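/- Let G be a finite group acting transitively and faithfully with fixity 2 on a finite set Ω, and let N be an abelian minimal normal subgroup acting semi-regularly on Ω such that there are exactly 6 N-orbits. Then G/N is not isomorphic to Sym_4 and not isomorphic to Alt_4. -/

import Mathlib

open MulAction Pointwise

def HasFixity (G Ω : Type*) [Group G] [MulAction G Ω] (k : ℕ) : Prop :=
  (∀ g : G, g ≠ 1 → (fixedBy Ω g).ncard ≤ k) ∧ ∃ g : G, g ≠ 1 ∧ (fixedBy Ω g).ncard = k

def IsSemiregular (G Ω : Type*) [Group G] [MulAction G Ω] (N : Subgroup G) : Prop :=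
  ∀ n ∈ N, n ≠ 1 → ∀ ω : Ω, n • ω ≠ ω

def IsMinimalNormal (G : Type*) [Group G] (N : Subgroup G) : Prop :=
  N.Normal ∧ N ≠ ⊥ ∧ ∀ M : Subgroup G, M.Normal → M ≤ N → M = ⊥ ∨ M = N

def IsOrbitOf (G Ω : Type*) [Group G] [MulAction G Ω] (N : Subgroup G) (s : Set Ω) : Prop :=
  ∃ ω : Ω, s = MulAction.orbit N ω

def IsRegularOn (G Ω : Type*) [Group G] [MulAction G Ω] (R : Subgroup G) : Prop :=
  (∀ ω ω' : Ω, ∃ r ∈ R, r • ω = ω') ∧ ∀ r ∈ R, r ≠ 1 → ∀ ω : Ω, r • ω ≠ ω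

def IsFrobeniusOn (G Ω : Type*) [Group G] [MulAction G Ω] (F : Subgroup G) (s : Set Ω) : Prop :=
  (∃ f ∈ F, f ≠ 1 ∧ ∃ ω ∈ s, f • ω = ω) ∧
  ∀ f ∈ F, f ≠ 1 → ∀ ω ∈ s, ∀ ω' ∈ s, f • ω = ω → f • ω' = ω' → ω = ω'


section AuxiliaryLemmas
open MulAction


section helpers

lemma pigeon2 {α β : Type*} [Finite α] (f : α → β)
    (hfib : ∀ b : β, (f ⁻¹' {b}).ncard ≤ 2) : Nat.card α ≤ 2 * (Set.range f).ncard := by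
  classical
  have := Fintype.ofFinite α
  have h1 : (Finset.univ : Finset α).card ≤ 2 * ((Finset.univ : Finset α).image f).card := by
    refine Finset.card_le_mul_card_image _ 2 ?_
    intro b _
    have : ((Finset.univ : Finset α).filter (fun x => f x = b)) = (f ⁻¹' {b}).toFinset := by
      ext x; simp
    rw [this, ← Set.ncard_eq_toFinset_card']
    exact hfib b
  have h2 : Set.range f = ↑((Finset.univ : Finset α).image f) := by
    ext x; simp
  rw [h2, Set.ncard_coe_finset, Nat.card_eq_fintype_card]
  exact h1

lemma card_map_mul_card_ker {G P : Type*} [Group G] [Finite G] [Group P] (ρ : G →* P)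
    (C : Subgroup G) (hkerle : ρ.ker ≤ C) :
    Nat.card C = Nat.card (C.map ρ) * Nat.card ρ.ker := by
  have hrange : (ρ.domRestrict C).range = C.map ρ := MonoidHom.restrict_range C ρ
  have hker : Nat.card (ρ.domRestrict C).ker = Nat.card ρ.ker := by
    rw [MonoidHom.ker_domRestrict]
    exact Nat.card_congr (Subgroup.subgroupOfEquivOfLe hkerle).toEquiv
  have h1 := Subgroup.card_eq_card_quotient_mul_card_subgroup (ρ.domRestrict C).ker
  have h2 : Nat.card (↥C ⧸ (ρ.domRestrict C).ker) = Nat.card (C.map ρ) := by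
    rw [← hrange]
    exact Nat.card_congr (QuotientGroup.quotientKerEquivRange (ρ.domRestrict C)).toEquiv
  rw [h1, h2, hker]

lemma card_comap_eq {G P : Type*} [Group G] [Finite G] [Group P] (ρ : G →* P) (K : Subgroup P)
    (hK : K ≤ ρ.range) : Nat.card (K.comap ρ) = Nat.card K * Nat.card ρ.ker := by
  have hkerle : ρ.ker ≤ K.comap ρ := by
    intro x hx
    simp only [Subgroup.mem_comap, MonoidHom.mem_ker.mp hx, one_mem]
  rw [card_map_mul_card_ker ρ _ hkerle, Subgroup.map_comap_eq, inf_eq_right.mpr hK]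

lemma card_eq_orbits_mul {H Ω : Type*} [Group H] [MulAction H Ω] [Finite Ω] [Finite H]
    (hfree : ∀ h : H, h ≠ 1 → ∀ ω : Ω, h • ω ≠ ω) :
    Nat.card Ω = Nat.card (orbitRel.Quotient H Ω) * Nat.card H := by
  classical
  have horb : ∀ ω : Ω, Nat.card (orbit H ω) = Nat.card H := by
    intro ω
    refine (Nat.card_congr (Equiv.ofBijective (fun h : H => (⟨h • ω, mem_orbit ω h⟩ : orbit H ω))
      ⟨?_, ?_⟩)).symm
    · intro h₁ h₂ he
      have h3 : h₁ • ω = h₂ • ω := congrArg Subtype.val he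
      have h4 : (h₂⁻¹ * h₁) • ω = ω := by rw [mul_smul, h3, inv_smul_smul]
      by_contra hne
      exact hfree (h₂⁻¹ * h₁) (fun h0 => hne (by
        have := mul_eq_one_iff_eq_inv.mp h0
        exact (inv_injective this).symm)) ω h4
    · rintro ⟨x, h, rfl⟩
      exact ⟨h, rfl⟩
  have := Fintype.ofFinite Ω
  have := Fintype.ofFinite H
  have := Fintype.ofFinite (orbitRel.Quotient H Ω)
  have e1 : Nat.card Ω = Nat.card (Σ q : orbitRel.Quotient H Ω, orbit H q.out) :=
    Nat.card_congr (selfEquivSigmaOrbits H Ω)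
  rw [e1, Nat.card_eq_fintype_card, Fintype.card_sigma]
  have e2 : ∀ q : orbitRel.Quotient H Ω, Fintype.card (orbit H q.out) = Nat.card H := by
    intro q; rw [← Nat.card_eq_fintype_card]; exact horb _
  calc ∑ q : orbitRel.Quotient H Ω, Fintype.card (orbit H q.out)
      = ∑ _q : orbitRel.Quotient H Ω, Nat.card H := Finset.sum_congr rfl (fun q _ => e2 q)
    _ = Fintype.card (orbitRel.Quotient H Ω) * Nat.card H := by
        rw [Finset.sum_const, Finset.card_univ, smul_eq_mul]
    _ = Nat.card (orbitRel.Quotient H Ω) * Nat.card H := by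
        rw [Nat.card_eq_fintype_card, Nat.card_eq_fintype_card]

lemma card_stab_eq {H Ω : Type*} [Group H] [Finite H] [MulAction H Ω] [Finite Ω]
    (htrans : ∀ ω ω' : Ω, ∃ h : H, h • ω = ω') (ω : Ω) :
    Nat.card Ω * Nat.card (stabilizer H ω) = Nat.card H := by
  classical
  have := Fintype.ofFinite Ω
  have := Fintype.ofFinite H
  have horb : orbit H ω = Set.univ := by
    refine Set.eq_univ_iff_forall.mpr (fun ω' => ?_)
    obtain ⟨h, hh⟩ := htrans ω ω'
    exact ⟨h, hh⟩
  have h1 : Nat.card (orbit H ω) = Nat.card Ω := by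
    rw [horb]
    exact Nat.card_congr (Equiv.Set.univ Ω)
  rw [← h1]
  have h2 := MulAction.card_orbit_mul_card_stabilizer_eq_card_group (G := H) (X := Ω) ω
  simp only [Nat.card_eq_fintype_card]
  exact h2

lemma ncard_subgroup {H : Type*} [Group H] (M : Subgroup H) :
    (M : Set H).ncard = Nat.card M := by
  rw [← Nat.card_coe_set_eq]
  rfl

end helpers

section K4sec

def K4 : Subgroup (Equiv.Perm (Fin 4)) where
  carrier := {1, Equiv.swap 0 1 * Equiv.swap 2 3, Equiv.swap 0 2 * Equiv.swap 1 3,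
    Equiv.swap 0 3 * Equiv.swap 1 2}
  mul_mem' := by decide
  one_mem' := by decide
  inv_mem' := by decide

instance K4.decMem : DecidablePred (· ∈ K4) := fun σ =>
  decidable_of_iff (σ = 1 ∨ σ = Equiv.swap 0 1 * Equiv.swap 2 3 ∨
    σ = Equiv.swap 0 2 * Equiv.swap 1 3 ∨ σ = Equiv.swap 0 3 * Equiv.swap 1 2) Iff.rfl

lemma K4.card : Nat.card K4 = 4 := by
  rw [Nat.card_eq_fintype_card]; decide

set_option maxRecDepth 100000 in
lemma K4.mem_of (σ : Equiv.Perm (Fin 4)) (h1 : Equiv.Perm.sign σ = 1) (h2 : σ ^ 4 = 1) :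
    σ ∈ K4 := by revert σ; decide

lemma K4.sign (σ : Equiv.Perm (Fin 4)) (h : σ ∈ K4) : Equiv.Perm.sign σ = 1 := by
  revert σ; decide

lemma alt4_card : Nat.card (alternatingGroup (Fin 4)) = 12 := by
  rw [Nat.card_eq_fintype_card]; decide

end K4sec

lemma K4.conj_cover : ∀ k ∈ K4, k ≠ 1 → ∃ σ : Equiv.Perm (Fin 4), Equiv.Perm.sign σ = 1 ∧
    σ * ((Equiv.swap 0 1 * Equiv.swap 2 3) * (Equiv.swap 0 2 * Equiv.swap 1 3)) * σ⁻¹ = k := by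
  decide


lemma core_A4 {H Ω : Type*} [Group H] [Finite H] [MulAction H Ω] [Finite Ω]
    (htrans : ∀ ω ω' : Ω, ∃ h : H, h • ω = ω')
    (hfix2 : ∀ g : H, g ≠ 1 → (MulAction.fixedBy Ω g).ncard ≤ 2)
    (ρ : H →* Equiv.Perm (Fin 4))
    (hab : ∀ x ∈ ρ.ker, ∀ y ∈ ρ.ker, x * y = y * x)
    (hsemi : ∀ x ∈ ρ.ker, x ≠ 1 → ∀ ω : Ω, x • ω ≠ ω)
    (hn2 : 2 ≤ Nat.card ρ.ker)
    (hΩ : Nat.card Ω = 6 * Nat.card ρ.ker)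
    (hZ : (∀ x ∈ ρ.ker, x * x = 1) ∨ (∀ x ∈ ρ.ker, x * x = 1 → x = 1))
    (hrange : ρ.range = alternatingGroup (Fin 4)) : False := by
  set N := ρ.ker with hN
  set n := Nat.card N with hn
  have hn0 : 0 < n := lt_of_lt_of_le (by norm_num) hn2
  -- card H = 12 n
  have hcardH : Nat.card H = 12 * n := by
    have h1 := Subgroup.card_eq_card_quotient_mul_card_subgroup N
    have h2 : Nat.card (H ⧸ N) = 12 := by
      rw [Nat.card_congr (QuotientGroup.quotientKerEquivRange ρ).toEquiv, hrange]
      exact alt4_card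
    rw [h1, h2]
  -- stabilizers have两 elements
  have hstab : ∀ ω : Ω, Nat.card (stabilizer H ω) = 2 := by
    intro ω
    have := card_stab_eq htrans ω
    rw [hΩ, hcardH] at this
    have h6 : (6 * n) * 2 = 12 * n := by ring
    have := Nat.eq_of_mul_eq_mul_left (show 0 < 6 * n by positivity)
      (by rw [this, h6] : (6 * n) * Nat.card (stabilizer H ω) = (6 * n) * 2)
    omega
  -- key: each point has a unique nontrivial stabilizing element, an involution
  have key : ∀ ω : Ω, ∃ t : H, t • ω = ω ∧ t ≠ 1 ∧ t * t = 1 ∧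
      (∀ x : H, x • ω = ω → x = 1 ∨ x = t) := by
    intro ω
    obtain ⟨b, hb1, hb2⟩ := (Nat.card_eq_two_iff' (1 : stabilizer H ω)).mp (hstab ω)
    refine ⟨(b : H), b.2, ?_, ?_, ?_⟩
    · intro h
      exact hb1 (Subtype.ext h)
    · rcases eq_or_ne ((b : H) * b) 1 with h | h
      · exact h
      · exfalso
        have hbb : ((b * b : stabilizer H ω) : H) = (b : H) * b := rfl
        have := hb2 (b * b) (by intro hc; exact h (by rw [← hbb, hc]; rfl))
        have : (b : H) * b = b := congrArg Subtype.val this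
        exact hb1 (Subtype.ext (by
          have := mul_right_cancel (by rw [this, one_mul] : (b:H) * b = 1 * b)
          exact this))
    · intro x hx
      rcases eq_or_ne x 1 with h | h
      · exact Or.inl h
      · right
        have := hb2 ⟨x, hx⟩ (by intro hc; exact h (congrArg Subtype.val hc))
        exact congrArg Subtype.val this
  choose T hT1 hT2 hT3 hT4 using key
  -- M := preimage of K4
  set M := K4.comap ρ with hM
  have hNM : N ≤ M := by
    intro x hx
    simp only [hM, Subgroup.mem_comap, MonoidHom.mem_ker.mp hx, one_mem]
  have hK4le : K4 ≤ ρ.range := by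
    rw [hrange]
    intro k hk
    exact Equiv.Perm.mem_alternatingGroup.mpr (K4.sign k hk)
  have hMcard : Nat.card M = 4 * n := by
    rw [hM, card_comap_eq ρ K4 hK4le, K4.card]
  have hTmem : ∀ ω : Ω, T ω ∈ (M : Set H) \ (N : Set H) := by
    intro ω
    constructor
    · show T ω ∈ M
      rw [hM, Subgroup.mem_comap]
      refine K4.mem_of _ ?_ ?_
      · have : ρ (T ω) ∈ ρ.range := ⟨T ω, rfl⟩
        rw [hrange] at this
        exact Equiv.Perm.mem_alternatingGroup.mp this
      · have : ρ (T ω) ^ 2 = 1 := by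
          rw [pow_two, ← map_mul, hT3, map_one]
        calc ρ (T ω) ^ 4 = (ρ (T ω) ^ 2) ^ 2 := by rw [← pow_mul]
          _ = 1 := by rw [this, one_pow]
    · intro hx
      exact hsemi (T ω) hx (hT2 ω) ω (hT1 ω)
  -- pigeonhole: range T = M \ N
  have hMN : (N : Set H) ⊆ (M : Set H) := hNM
  have hMdiff : ((M : Set H) \ (N : Set H)).ncard = 3 * n := by
    rw [Set.ncard_diff hMN, ncard_subgroup, ncard_subgroup, hMcard, ← hn]
    omega
  have hrangeT : Set.range T = (M : Set H) \ (N : Set H) := by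
    have hsub : Set.range T ⊆ (M : Set H) \ (N : Set H) := by
      rintro x ⟨ω, rfl⟩; exact hTmem ω
    have hfib : ∀ g : H, (T ⁻¹' {g}).ncard ≤ 2 := by
      intro g
      rcases Set.eq_empty_or_nonempty (T ⁻¹' {g}) with h | ⟨ω, hω⟩
      · rw [h]; simp
      · have hTg : T ω = g := hω
        have hg : g ≠ 1 := by rw [← hTg]; exact hT2 ω
        refine le_trans (Set.ncard_le_ncard ?_ (Set.toFinite _)) (hfix2 g hg)
        intro ω' hω'
        have h2' : T ω' = g := hω'
        show g • ω' = ω'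
        rw [← h2']; exact hT1 ω'
    refine Set.eq_of_subset_of_ncard_le hsub ?_
    have hp := pigeon2 T hfib
    rw [hΩ] at hp
    rw [hMdiff]
    omega
  -- every element of M \ N is an involution with a fixed point
  have hinvol : ∀ m : H, m ∈ M → m ∉ N → m * m = 1 ∧ ∃ ω : Ω, m • ω = ω := by
    intro m hm hm'
    have : m ∈ Set.range T := by rw [hrangeT]; exact ⟨hm, hm'⟩
    obtain ⟨ω, rfl⟩ := this
    exact ⟨hT3 ω, ω, hT1 ω⟩
  -- every element of M \ N inverts N
  have hinv : ∀ u : H, u ∈ M → u ∉ N → ∀ x ∈ N, u * x * u⁻¹ = x⁻¹ := by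
    intro u hu hu' x hx
    have hxu : x * u ∈ M := mul_mem (hNM hx) hu
    have hxu' : x * u ∉ N := by
      intro h
      exact hu' (by
        have : x⁻¹ * (x * u) ∈ N := mul_mem (inv_mem hx) h
        rwa [inv_mul_cancel_left] at this)
    have h1 : (x * u) * (x * u) = 1 := (hinvol _ hxu hxu').1
    have h2 : u * u = 1 := (hinvol _ hu hu').1
    have hui : u⁻¹ = u := mul_eq_one_iff_inv_eq.mp h2
    rw [hui]
    have h5 : x * (u * x * u) = 1 := by
      calc x * (u * x * u) = (x * u) * (x * u) := by group
        _ = 1 := h1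
    exact (inv_eq_of_mul_eq_one_right h5).symm
  -- branch on the structure of N
  rcases hZ with hZa | hZb
  · -- N elementary abelian 2-group: first show n = 2
    have hcomm : ∀ u : H, u ∈ M → u ∉ N → ∀ x ∈ N, u * x = x * u := by
      intro u hu hu' x hx
      have h1 := hinv u hu hu' x hx
      have hxi : x⁻¹ = x := mul_eq_one_iff_inv_eq.mp (hZa x hx)
      rw [hxi] at h1
      have := congrArg (fun y => y * u) h1
      simpa [mul_assoc] using this
    have hΩne : Nonempty Ω := by
      have h0 : Nat.card Ω ≠ 0 := by rw [hΩ]; positivity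
      exact (Nat.card_ne_zero.mp h0).1
    obtain ⟨ω₀⟩ := hΩne
    set u := T ω₀ with hu
    have hufix : u • ω₀ = ω₀ := hT1 ω₀
    have huM : u ∈ M := (hTmem ω₀).1
    have huN : u ∉ N := (hTmem ω₀).2
    have hu1 : u ≠ 1 := hT2 ω₀
    have hinj : Set.InjOn (fun x : H => x • ω₀) (N : Set H) := by
      intro x₁ h₁ x₂ h₂ he
      have he' : x₁ • ω₀ = x₂ • ω₀ := he
      by_contra hne
      refine hsemi (x₂⁻¹ * x₁) (mul_mem (inv_mem h₂) h₁) ?_ ω₀ ?_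
      · intro h0
        exact hne ((inv_injective (mul_eq_one_iff_eq_inv.mp h0)).symm)
      · rw [mul_smul, he', inv_smul_smul]
    have hn2' : n = 2 := by
      have himg : ((fun x : H => x • ω₀) '' (N : Set H)) ⊆ MulAction.fixedBy Ω u := by
        rintro _ ⟨x, hx, rfl⟩
        show u • x • ω₀ = x • ω₀
        rw [← mul_smul, hcomm u huM huN x hx, mul_smul, hufix]
      have hcard : ((fun x : H => x • ω₀) '' (N : Set H)).ncard = n := by
        rw [Set.ncard_image_of_injOn hinj, ncard_subgroup]
      have := Set.ncard_le_ncard himg (Set.toFinite _)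
      rw [hcard] at this
      have := le_trans this (hfix2 u hu1)
      omega
    -- M is elementary abelian of order 8
    have hM2 : ∀ m ∈ M, m * m = 1 := by
      intro m hm
      by_cases hmN : m ∈ N
      · exact hZa m hmN
      · exact (hinvol m hm hmN).1
    have hMinv : ∀ m ∈ M, m⁻¹ = m := fun m hm => mul_eq_one_iff_inv_eq.mp (hM2 m hm)
    have hMab : ∀ a ∈ M, ∀ b ∈ M, a * b = b * a := by
      intro a ha b hb
      calc a * b = (a * b)⁻¹ := (hMinv _ (mul_mem ha hb)).symm
        _ = b⁻¹ * a⁻¹ := mul_inv_rev a b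
        _ = b * a := by rw [hMinv _ hb, hMinv _ ha]
    -- the orbit of ω₀ under M consists of fixed points of u
    set f : ↥M → Ω := fun m => (m : H) • ω₀ with hf
    have hfibM : ∀ ω' : Ω, (f ⁻¹' {ω'}).ncard ≤ 2 := by
      intro ω'
      rcases Set.eq_empty_or_nonempty (f ⁻¹' {ω'}) with h | ⟨m₁, hm₁⟩
      · rw [h]; simp
      · have hm₁' : (m₁ : H) • ω₀ = ω' := hm₁
        have hsub : f ⁻¹' {ω'} ⊆ {m₁, m₁ * ⟨u, huM⟩} := by
          intro m hm
          have hm' : (m : H) • ω₀ = ω' := hm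
          have h0 : ((m₁ : H)⁻¹ * m) • ω₀ = ω₀ := by
            rw [mul_smul, hm', ← hm₁', inv_smul_smul]
          rcases hT4 ω₀ _ h0 with h | h
          · left
            have : (m₁ : H)⁻¹ * (m : H) = 1 := h
            have := (inv_injective (mul_eq_one_iff_eq_inv.mp this)).symm
            exact Subtype.ext this
          · right
            have : (m₁ : H)⁻¹ * (m : H) = u := h
            refine Subtype.ext ?_
            show (m : H) = (m₁ : H) * u
            have h9 : (m₁ : H) * u = (m : H) := by rw [← this]; group
            exact h9.symm
        refine le_trans (Set.ncard_le_ncard hsub (Set.toFinite _)) ?_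
        exact le_trans (Set.ncard_insert_le _ _) (by rw [Set.ncard_singleton])
    have hp := pigeon2 f hfibM
    have hrsub : Set.range f ⊆ MulAction.fixedBy Ω u := by
      rintro _ ⟨m, rfl⟩
      show u • (m : H) • ω₀ = (m : H) • ω₀
      rw [← mul_smul, hMab _ huM _ m.2, mul_smul, hufix]
    have h8 : Nat.card M ≤ 4 := by
      have h1 := Set.ncard_le_ncard hrsub (Set.toFinite _)
      have h2 := le_trans h1 (hfix2 u hu1)
      omega
    rw [hMcard, hn2'] at h8
    omega
  · -- N has odd order
    have hodd : ¬ (2 ∣ n) := by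
      intro hdvd
      haveI := Fintype.ofFinite ↥N
      haveI hfact : Fact (Nat.Prime 2) := ⟨Nat.prime_two⟩
      obtain ⟨x, hx⟩ := exists_prime_orderOf_dvd_card (G := ↥N) 2
        (by rwa [← Nat.card_eq_fintype_card])
      have hx2 : x * x = 1 := by rw [← sq, ← hx]; exact pow_orderOf_eq_one x
      have hx1 : x ≠ 1 := by
        intro h
        rw [h, orderOf_one] at hx
        omega
      have hcoe : (x : H) * (x : H) = 1 := by
        have : ((x * x : ↥N) : H) = 1 := by rw [hx2]; rfl
        simpa using this
      have := hZb (x : H) x.2 hcoe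
      exact hx1 (Subtype.ext this)
    have hn3 : 3 ≤ n := by
      have hne : n ≠ 2 := fun h => hodd (by rw [h])
      omega
    -- two preimages of distinct Klein involutions
    have hk₁K : (Equiv.swap 0 1 * Equiv.swap 2 3 : Equiv.Perm (Fin 4)) ∈ K4 := by decide
    have hk₂K : (Equiv.swap 0 2 * Equiv.swap 1 3 : Equiv.Perm (Fin 4)) ∈ K4 := by decide
    obtain ⟨g₁, hg₁⟩ : (Equiv.swap 0 1 * Equiv.swap 2 3 : Equiv.Perm (Fin 4)) ∈ ρ.range := by
      rw [hrange]
      exact Equiv.Perm.mem_alternatingGroup.mpr (by decide)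
    obtain ⟨g₂, hg₂⟩ : (Equiv.swap 0 2 * Equiv.swap 1 3 : Equiv.Perm (Fin 4)) ∈ ρ.range := by
      rw [hrange]
      exact Equiv.Perm.mem_alternatingGroup.mpr (by decide)
    have hg₁M : g₁ ∈ M := by rw [hM, Subgroup.mem_comap, hg₁]; exact hk₁K
    have hg₂M : g₂ ∈ M := by rw [hM, Subgroup.mem_comap, hg₂]; exact hk₂K
    have hg₁N : g₁ ∉ N := by
      intro h
      have : ρ g₁ = 1 := MonoidHom.mem_ker.mp h
      rw [hg₁] at this
      exact absurd this (by decide)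
    have hg₂N : g₂ ∉ N := by
      intro h
      have : ρ g₂ = 1 := MonoidHom.mem_ker.mp h
      rw [hg₂] at this
      exact absurd this (by decide)
    set c := g₁ * g₂ with hc
    have hρc : ρ c = (Equiv.swap 0 1 * Equiv.swap 2 3) * (Equiv.swap 0 2 * Equiv.swap 1 3) := by
      rw [hc, map_mul, hg₁, hg₂]
    have hcN : c ∉ N := by
      intro h
      have : ρ c = 1 := MonoidHom.mem_ker.mp h
      rw [hρc] at this
      exact absurd this (by decide)
    have hcfix : ∀ x ∈ N, c * x * c⁻¹ = x := by
      intro x hx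
      have e1 := hinv g₂ hg₂M hg₂N x hx
      have e2 := hinv g₁ hg₁M hg₁N x⁻¹ (inv_mem hx)
      calc c * x * c⁻¹ = g₁ * (g₂ * x * g₂⁻¹) * g₁⁻¹ := by rw [hc]; group
        _ = g₁ * x⁻¹ * g₁⁻¹ := by rw [e1]
        _ = x⁻¹⁻¹ := e2
        _ = x := inv_inv x
    set C := Subgroup.centralizer (N : Set H) with hC
    have hNC : N ≤ C := by
      intro y hy
      rw [hC, Subgroup.mem_centralizer_iff]
      intro x hx
      exact hab x hx y hy
    have hcC : c ∈ C := by
      rw [hC, Subgroup.mem_centralizer_iff]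
      intro x hx
      have := hcfix x hx
      calc x * c = (c * x * c⁻¹) * c := by rw [this]
        _ = c * x := by group
    have hCnormal : ∀ g : H, ∀ y ∈ C, g * y * g⁻¹ ∈ C := by
      intro g y hy
      rw [hC, Subgroup.mem_centralizer_iff]
      intro x hx
      have hx' : g⁻¹ * x * g ∈ N := by
        have : g⁻¹ * x * g⁻¹⁻¹ ∈ N := (MonoidHom.normal_ker ρ).conj_mem x hx g⁻¹
        rwa [inv_inv] at this
      have hyx' : (g⁻¹ * x * g) * y = y * (g⁻¹ * x * g) :=
        (Subgroup.mem_centralizer_iff.mp hy) _ hx'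
      calc x * (g * y * g⁻¹) = g * ((g⁻¹ * x * g) * y) * g⁻¹ := by group
        _ = g * (y * (g⁻¹ * x * g)) * g⁻¹ := by rw [hyx']
        _ = (g * y * g⁻¹) * x := by group
    have hCsemi : ∀ y : H, y ∈ C → y ≠ 1 → ∀ ω : Ω, y • ω ≠ ω := by
      intro y hy hy1 ω hfixω
      have himg : ((fun x : H => x • ω) '' (N : Set H)) ⊆ MulAction.fixedBy Ω y := by
        rintro _ ⟨x, hx, rfl⟩
        show y • x • ω = x • ω
        have hxy : x * y = y * x := (Subgroup.mem_centralizer_iff.mp hy) x hx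
        rw [← mul_smul, ← hxy, mul_smul, hfixω]
      have hinj : Set.InjOn (fun x : H => x • ω) (N : Set H) := by
        intro x₁ h₁ x₂ h₂ he
        have he' : x₁ • ω = x₂ • ω := he
        by_contra hne
        refine hsemi (x₂⁻¹ * x₁) (mul_mem (inv_mem h₂) h₁) ?_ ω ?_
        · intro h0
          exact hne ((inv_injective (mul_eq_one_iff_eq_inv.mp h0)).symm)
        · rw [mul_smul, he', inv_smul_smul]
      have h1 := Set.ncard_le_ncard himg (Set.toFinite _)
      rw [Set.ncard_image_of_injOn hinj, ncard_subgroup] at h1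
      have h2 := le_trans h1 (hfix2 y hy1)
      omega
    -- C acts semiregularly, so |C| divides |Ω| = 6n
    have hfreeC : ∀ y : ↥C, y ≠ 1 → ∀ ω : Ω, y • ω ≠ ω := by
      intro y hy1 ω
      refine hCsemi (y : H) y.2 ?_ ω
      intro h
      exact hy1 (Subtype.ext h)
    have hdvd := card_eq_orbits_mul hfreeC
    have hdvd6n : Nat.card C ∣ 6 * n := by
      rw [hΩ] at hdvd
      exact ⟨Nat.card (orbitRel.Quotient (↥C) Ω), by rw [hdvd, mul_comm]⟩
    have hCcard : Nat.card C = Nat.card (C.map ρ) * n := card_map_mul_card_ker ρ C hNC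
    have hK4le' : K4 ≤ C.map ρ := by
      intro k hk
      by_cases hk1 : k = 1
      · rw [hk1]; exact one_mem _
      · obtain ⟨σ, hσsign, hσconj⟩ := K4.conj_cover k hk hk1
        have hσr : σ ∈ ρ.range := by
          rw [hrange]
          exact Equiv.Perm.mem_alternatingGroup.mpr hσsign
        obtain ⟨g, hg⟩ := hσr
        refine ⟨g * c * g⁻¹, hCnormal g c hcC, ?_⟩
        rw [map_mul, map_mul, map_inv, hg, hρc]
        exact hσconj
    have h4dvd : 4 ∣ Nat.card (C.map ρ) := by
      have hd := Subgroup.card_dvd_of_le hK4le'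
      rwa [K4.card] at hd
    have h6 : Nat.card (C.map ρ) ∣ 6 := by
      have h6' : Nat.card (C.map ρ) * n ∣ 6 * n := by
        rw [← hCcard]
        exact hdvd6n
      exact (Nat.mul_dvd_mul_iff_right hn0).mp h6'
    have : (4 : ℕ) ∣ 6 := dvd_trans h4dvd h6
    exact absurd this (by decide)


-- orbit set counting (needs IsOrbitOf so lives here)
lemma card_orbitSet {G Ω : Type*} [Group G] [MulAction G Ω] (N : Subgroup G) :
    Nat.card (orbitRel.Quotient N Ω) = {s : Set Ω | IsOrbitOf G Ω N s}.ncard := by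
  rw [← Nat.card_coe_set_eq]
  refine Nat.card_congr (Equiv.ofBijective ?_ ⟨?_, ?_⟩)
  · exact Quotient.lift (fun ω => (⟨orbit N ω, ⟨ω, rfl⟩⟩ : {s : Set Ω // IsOrbitOf G Ω N s}))
      (fun a b hab => Subtype.ext (orbit_eq_iff.mpr hab))
  · intro a b
    induction a using Quotient.ind
    induction b using Quotient.ind
    intro h
    exact Quotient.sound (orbit_eq_iff.mp (congrArg Subtype.val h))
  · rintro ⟨s, ω, rfl⟩
    exact ⟨⟦ω⟧, rfl⟩


end AuxiliaryLemmas

theorem stmt_6 (G Ω : Type*) [Group G] [Finite G] [MulAction G Ω] [Finite Ω]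
    [FaithfulSMul G Ω] [IsPretransitive G Ω] (hfix : HasFixity G Ω 2)
    (N : Subgroup G) (hmin : IsMinimalNormal G N) (hab : ∀ x ∈ N, ∀ y ∈ N, x * y = y * x)
    (hsemi : IsSemiregular G Ω N)
    (horb : {s : Set Ω | IsOrbitOf G Ω N s}.ncard = 6) :
    haveI := hmin.1
    ¬ Nonempty ((G ⧸ N) ≃* Equiv.Perm (Fin 4)) ∧
      ¬ Nonempty ((G ⧸ N) ≃* alternatingGroup (Fin 4)) := by
  obtain ⟨hfix2, -⟩ := hfix
  obtain ⟨hNnormal, hNbot, hminimal⟩ := hmin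
  haveI := hNnormal
  have htrans : ∀ ω ω' : Ω, ∃ g : G, g • ω = ω' := fun ω ω' => MulAction.exists_smul_eq G ω ω'
  -- basic facts
  have hn2 : 2 ≤ Nat.card N := (Subgroup.one_lt_card_iff_ne_bot N).mpr hNbot
  have hfreeN : ∀ x : ↥N, x ≠ 1 → ∀ ω : Ω, x • ω ≠ ω := by
    intro x hx ω
    refine hsemi (x : G) x.2 ?_ ω
    intro h
    exact hx (Subtype.ext h)
  have hΩcard : Nat.card Ω = 6 * Nat.card N := by
    rw [card_eq_orbits_mul hfreeN, card_orbitSet N, horb]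
  -- the squares dichotomy from minimality
  have hZ : (∀ x ∈ N, x * x = 1) ∨ (∀ x ∈ N, x * x = 1 → x = 1) := by
    set Z : Subgroup G :=
      { carrier := {x : G | x ∈ N ∧ x * x = 1}
        one_mem' := ⟨N.one_mem, by rw [one_mul]⟩
        mul_mem' := by
          rintro a b ⟨haN, ha⟩ ⟨hbN, hb⟩
          refine ⟨mul_mem haN hbN, ?_⟩
          have hcomm := hab a haN b hbN
          calc a * b * (a * b) = a * (b * a) * b := by group
            _ = a * (a * b) * b := by rw [← hcomm]
            _ = (a * a) * (b * b) := by group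
            _ = 1 := by rw [ha, hb, one_mul]
        inv_mem' := by
          rintro a ⟨haN, ha⟩
          refine ⟨inv_mem haN, ?_⟩
          calc a⁻¹ * a⁻¹ = (a * a)⁻¹ := by rw [mul_inv_rev]
            _ = 1 := by rw [ha, inv_one] } with hZdef
    have hZnormal : Z.Normal := by
      constructor
      rintro x ⟨hxN, hx⟩ g
      refine ⟨hNnormal.conj_mem x hxN g, ?_⟩
      calc g * x * g⁻¹ * (g * x * g⁻¹) = g * (x * x) * g⁻¹ := by group
        _ = 1 := by rw [hx]; group
    have hZle : Z ≤ N := fun x hx => hx.1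
    rcases hminimal Z hZnormal hZle with hbot | heq
    · right
      intro x hxN hx
      have : x ∈ Z := ⟨hxN, hx⟩
      rw [hbot] at this
      exact this
    · left
      intro x hxN
      have : x ∈ Z := by rw [heq]; exact hxN
      exact this.2
  constructor
  · -- G/N ≃ S4
    rintro ⟨φ⟩
    classical
    set ρ : G →* Equiv.Perm (Fin 4) := φ.toMonoidHom.comp (QuotientGroup.mk' N) with hρ
    have hker : ρ.ker = N := by
      ext x
      simp only [hρ, MonoidHom.mem_ker, MonoidHom.comp_apply, MulEquiv.coe_toMonoidHom]
      rw [map_eq_one_iff _ φ.injective, QuotientGroup.mk'_apply, QuotientGroup.eq_one_iff]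
    have hsurj : Function.Surjective ρ := by
      intro k
      obtain ⟨g, hg⟩ := QuotientGroup.mk'_surjective N (φ.symm k)
      refine ⟨g, ?_⟩
      show φ.toMonoidHom ((QuotientGroup.mk' N) g) = k
      rw [hg]
      exact φ.apply_symm_apply k
    have hΩpos : Nonempty Ω := by
      have h0 : Nat.card Ω ≠ 0 := by rw [hΩcard]; omega
      exact (Nat.card_ne_zero.mp h0).1
    obtain ⟨ω₀⟩ := hΩpos
    by_cases hA : ∀ g : G, g • ω₀ = ω₀ → ρ g ∈ alternatingGroup (Fin 4)
    · -- all point stabilizers map into A4 : counting contradiction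
      have hstabA : ∀ ω : Ω, ∀ g : G, g • ω = ω → ρ g ∈ alternatingGroup (Fin 4) := by
        intro ω g hg
        obtain ⟨h, hh⟩ := htrans ω₀ ω
        have h1 : (h⁻¹ * g * h) • ω₀ = ω₀ := by
          rw [mul_smul, mul_smul, hh, hg, ← hh, inv_smul_smul]
        have h2 := hA _ h1
        have e : ρ g = ρ h * ρ (h⁻¹ * g * h) * (ρ h)⁻¹ := by
          rw [← map_inv, ← map_mul, ← map_mul]
          congr 1
          group
        rw [e]
        exact alternatingGroup.normal.conj_mem _ h2 (ρ h)
      have hcardG : Nat.card G = 24 * Nat.card N := by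
        have h1 := Subgroup.card_eq_card_quotient_mul_card_subgroup N
        have h2 : Nat.card (G ⧸ N) = 24 := by
          rw [Nat.card_congr φ.toEquiv, Nat.card_eq_fintype_card]
          decide
        rw [h1, h2]
      have hstab4 : ∀ ω : Ω, Nat.card (stabilizer G ω) = 4 := by
        intro ω
        have h1 := card_stab_eq htrans ω
        rw [hΩcard, hcardG] at h1
        have hnn : 0 < Nat.card N := by omega
        have h6 : (6 * Nat.card N) * 4 = 24 * Nat.card N := by ring
        have := Nat.eq_of_mul_eq_mul_left (show 0 < 6 * Nat.card N by omega)
          (by rw [h1, h6] : (6 * Nat.card N) * Nat.card (stabilizer G ω) =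
            (6 * Nat.card N) * 4)
        omega
      set M₀ := K4.comap ρ with hM₀
      have hNM₀ : (N : Set G) ⊆ (M₀ : Set G) := by
        intro x hx
        have : ρ x = 1 := MonoidHom.mem_ker.mp (hker ▸ hx : x ∈ ρ.ker)
        show x ∈ M₀
        rw [hM₀, Subgroup.mem_comap, this]
        exact one_mem _
      have hM₀card : Nat.card M₀ = 4 * Nat.card N := by
        rw [hM₀, card_comap_eq ρ K4 (fun k _ => hsurj k), K4.card, hker]
      have hMdiff : ((M₀ : Set G) \ (N : Set G)).ncard = 3 * Nat.card N := by
        rw [Set.ncard_diff hNM₀, ncard_subgroup, ncard_subgroup, hM₀card]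
        omega
      have hmem : ∀ g : G, g ≠ 1 → ∀ ω : Ω, g • ω = ω → g ∈ (M₀ : Set G) \ (N : Set G) := by
        intro g hg1 ω hg
        constructor
        · show g ∈ M₀
          rw [hM₀, Subgroup.mem_comap]
          refine K4.mem_of _ (Equiv.Perm.mem_alternatingGroup.mp (hstabA ω g hg)) ?_
          have hg4 : g ^ 4 = 1 := by
            have hx : ((⟨g, hg⟩ : stabilizer G ω) ^ Nat.card (stabilizer G ω)) = 1 :=
              pow_card_eq_one'
            rw [hstab4 ω] at hx
            have := congrArg (Subtype.val) hx
            simpa using this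
          rw [← map_pow, hg4, map_one]
        · intro hgN
          exact hsemi g hgN hg1 ω hg
      -- double counting
      haveI := Fintype.ofFinite G
      haveI := Fintype.ofFinite Ω
      set P : Finset (G × Ω) :=
        Finset.univ.filter (fun p : G × Ω => p.1 • p.2 = p.2 ∧ p.1 ≠ 1) with hP
      -- lower bound: fibers over Ω
      have hlow : P.card = 3 * Nat.card Ω := by
        have h1 := Finset.card_eq_sum_card_fiberwise
          (f := fun p : G × Ω => p.2) (s := P) (t := Finset.univ)
          (fun p _ => Finset.mem_univ _)
        rw [h1]
        have h2 : ∀ ω : Ω, (P.filter (fun p => p.2 = ω)).card = 3 := by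
          intro ω
          have him : P.filter (fun p => p.2 = ω) =
              Finset.image (fun g => (g, ω)) (((stabilizer G ω : Set G) \ {1}).toFinset) := by
            ext p
            simp only [hP, Finset.mem_filter, Finset.mem_univ, true_and, Finset.mem_image,
              Set.mem_toFinset, Set.mem_diff, SetLike.mem_coe, mem_stabilizer_iff,
              Set.mem_singleton_iff]
            constructor
            · rintro ⟨⟨hfix', hne⟩, rfl⟩
              exact ⟨p.1, ⟨hfix', hne⟩, rfl⟩
            · rintro ⟨g, ⟨hfix', hne⟩, rfl⟩
              exact ⟨⟨hfix', hne⟩, rfl⟩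
          rw [him, Finset.card_image_of_injective _ (fun a b hab' => (Prod.ext_iff.mp hab').1),
            ← Set.ncard_eq_toFinset_card', Set.ncard_diff_singleton_of_mem (one_mem _),
            ncard_subgroup, hstab4]
        calc ∑ ω : Ω, (P.filter (fun p => p.2 = ω)).card = ∑ _ω : Ω, 3 :=
              Finset.sum_congr rfl (fun ω _ => h2 ω)
          _ = Fintype.card Ω * 3 := by rw [Finset.sum_const, Finset.card_univ, smul_eq_mul]
          _ = 3 * Nat.card Ω := by rw [← Nat.card_eq_fintype_card]; ring
      -- upper bound: fibers over G
      have hup : P.card ≤ 2 * (3 * Nat.card N) := by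
        have h1 := Finset.card_eq_sum_card_fiberwise
          (f := fun p : G × Ω => p.1) (s := P)
          (t := ((M₀ : Set G) \ (N : Set G)).toFinset)
          (by
            intro p hp
            rw [hP, Finset.mem_coe, Finset.mem_filter] at hp
            rw [Finset.mem_coe, Set.mem_toFinset]
            exact hmem p.1 hp.2.2 p.2 hp.2.1)
        rw [h1]
        have h2 : ∀ g ∈ ((M₀ : Set G) \ (N : Set G)).toFinset,
            (P.filter (fun p => p.1 = g)).card ≤ 2 := by
          intro g hg
          rw [Set.mem_toFinset] at hg
          have hgne : g ≠ 1 := by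
            intro h
            exact hg.2 (h ▸ one_mem N)
          have hsub : P.filter (fun p => p.1 = g) ⊆
              Finset.image (fun ω => (g, ω)) (MulAction.fixedBy Ω g).toFinset := by
            intro p hp
            simp only [hP, Finset.mem_filter, Finset.mem_univ, true_and] at hp
            obtain ⟨⟨hfix', -⟩, rfl⟩ := hp
            simp only [Finset.mem_image, Set.mem_toFinset, MulAction.mem_fixedBy]
            exact ⟨p.2, hfix', rfl⟩
          refine le_trans (Finset.card_le_card hsub) ?_
          refine le_trans (Finset.card_image_le) ?_
          rw [← Set.ncard_eq_toFinset_card']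
          exact hfix2 g hgne
        calc ∑ g ∈ ((M₀ : Set G) \ (N : Set G)).toFinset,
              (P.filter (fun p => p.1 = g)).card
            ≤ ∑ _g ∈ ((M₀ : Set G) \ (N : Set G)).toFinset, 2 := Finset.sum_le_sum h2
          _ = ((M₀ : Set G) \ (N : Set G)).toFinset.card * 2 := by
              rw [Finset.sum_const, smul_eq_mul]
          _ = (3 * Nat.card N) * 2 := by
              rw [← Set.ncard_eq_toFinset_card', hMdiff]
          _ = 2 * (3 * Nat.card N) := by ring
      rw [hlow, hΩcard] at hup
      omega
    · -- some stabilizer element has odd sign : pass to the preimage of A4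
      push_neg at hA
      obtain ⟨s, hsfix, hsodd⟩ := hA
      set R := (alternatingGroup (Fin 4)).comap ρ with hR
      have hNR : N ≤ R := by
        intro x hx
        have : ρ x = 1 := MonoidHom.mem_ker.mp (hker ▸ hx : x ∈ ρ.ker)
        rw [hR, Subgroup.mem_comap, this]
        exact one_mem _
      have hsodd' : Equiv.Perm.sign (ρ s) = -1 := by
        rcases Int.units_eq_one_or (Equiv.Perm.sign (ρ s)) with h | h
        · exact absurd (Equiv.Perm.mem_alternatingGroup.mpr h) hsodd
        · exact h
      have htransR : ∀ ω ω' : Ω, ∃ r : ↥R, r • ω = ω' := by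
        intro ω ω'
        obtain ⟨g, hg⟩ := htrans ω ω'
        by_cases hgA : ρ g ∈ alternatingGroup (Fin 4)
        · exact ⟨⟨g, by rw [hR]; exact Subgroup.mem_comap.mpr hgA⟩, hg⟩
        · obtain ⟨h, hh⟩ := htrans ω₀ ω
          have hsfix2 : (h * s * h⁻¹) • ω = ω := by
            rw [mul_smul, mul_smul, ← hh, inv_smul_smul, hsfix, hh]
          have hsign : Equiv.Perm.sign (ρ (h * s * h⁻¹)) = -1 := by
            simp only [map_mul, map_inv, hsodd']
            rcases Int.units_eq_one_or (Equiv.Perm.sign (ρ h)) with h' | h' <;> rw [h'] <;> decide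
          have hgsign : Equiv.Perm.sign (ρ g) = -1 := by
            rcases Int.units_eq_one_or (Equiv.Perm.sign (ρ g)) with h' | h'
            · exact absurd (Equiv.Perm.mem_alternatingGroup.mpr h') hgA
            · exact h'
          refine ⟨⟨g * (h * s * h⁻¹), ?_⟩, ?_⟩
          · rw [hR]
            refine Subgroup.mem_comap.mpr (Equiv.Perm.mem_alternatingGroup.mpr ?_)
            rw [map_mul, map_mul Equiv.Perm.sign, hgsign, hsign]
            decide
          · show (g * (h * s * h⁻¹)) • ω = ω'
            rw [mul_smul, hsfix2, hg]
      have hfix2R : ∀ r : ↥R, r ≠ 1 → (MulAction.fixedBy Ω r).ncard ≤ 2 := by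
        intro r hr
        have h1 : (r : G) ≠ 1 := fun h => hr (Subtype.ext h)
        have h2 : MulAction.fixedBy Ω r = MulAction.fixedBy Ω (r : G) := rfl
        rw [h2]
        exact hfix2 _ h1
      set ρ' : ↥R →* Equiv.Perm (Fin 4) := ρ.comp R.subtype with hρ'
      have hker' : ρ'.ker = N.subgroupOf R := by
        ext x
        simp only [hρ', MonoidHom.mem_ker, MonoidHom.comp_apply, Subgroup.coe_subtype,
          Subgroup.mem_subgroupOf]
        rw [← MonoidHom.mem_ker, hker]
      have hrange' : ρ'.range = alternatingGroup (Fin 4) := by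
        ext k
        constructor
        · rintro ⟨⟨g, hgR⟩, rfl⟩
          exact (hR ▸ hgR : g ∈ (alternatingGroup (Fin 4)).comap ρ)
        · intro hk
          obtain ⟨g, hg⟩ := hsurj k
          have hgR : g ∈ R := by
            rw [hR, Subgroup.mem_comap, hg]
            exact hk
          exact ⟨⟨g, hgR⟩, hg⟩
      have hcardN' : Nat.card (N.subgroupOf R) = Nat.card N :=
        Nat.card_congr (Subgroup.subgroupOfEquivOfLe hNR).toEquiv
      have hab' : ∀ x ∈ ρ'.ker, ∀ y ∈ ρ'.ker, x * y = y * x := by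
        rw [hker']
        intro x hx y hy
        exact Subtype.ext (hab _ (Subgroup.mem_subgroupOf.mp hx) _
          (Subgroup.mem_subgroupOf.mp hy))
      have hsemi' : ∀ x ∈ ρ'.ker, x ≠ 1 → ∀ ω : Ω, x • ω ≠ ω := by
        rw [hker']
        intro x hx hx1 ω
        exact hsemi _ (Subgroup.mem_subgroupOf.mp hx) (fun h => hx1 (Subtype.ext h)) ω
      have hn2' : 2 ≤ Nat.card ρ'.ker := by rw [hker', hcardN']; exact hn2
      have hΩ' : Nat.card Ω = 6 * Nat.card ρ'.ker := by rw [hker', hcardN']; exact hΩcard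
      have hZ' : (∀ x ∈ ρ'.ker, x * x = 1) ∨ (∀ x ∈ ρ'.ker, x * x = 1 → x = 1) := by
        rw [hker']
        rcases hZ with h | h
        · left
          intro x hx
          exact Subtype.ext (h _ (Subgroup.mem_subgroupOf.mp hx))
        · right
          intro x hx hxx
          refine Subtype.ext (h _ (Subgroup.mem_subgroupOf.mp hx) ?_)
          have := congrArg Subtype.val hxx
          simpa using this
      exact core_A4 htransR hfix2R ρ' hab' hsemi' hn2' hΩ' hZ' hrange'

  · -- G/N ≃ A4
    rintro ⟨φ⟩
    set ρ : G →* Equiv.Perm (Fin 4) :=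
      ((alternatingGroup (Fin 4)).subtype).comp (φ.toMonoidHom.comp (QuotientGroup.mk' N))
      with hρ
    have hker : ρ.ker = N := by
      ext x
      simp only [hρ, MonoidHom.mem_ker, MonoidHom.comp_apply, MulEquiv.coe_toMonoidHom,
        Subgroup.coe_subtype]
      rw [OneMemClass.coe_eq_one, map_eq_one_iff _ φ.injective, QuotientGroup.mk'_apply,
        QuotientGroup.eq_one_iff]
    have hrange : ρ.range = alternatingGroup (Fin 4) := by
      ext k
      constructor
      · rintro ⟨g, rfl⟩
        exact (φ ((QuotientGroup.mk' N) g)).2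
      · intro hk
        obtain ⟨g, hg⟩ := QuotientGroup.mk'_surjective N (φ.symm ⟨k, hk⟩)
        refine ⟨g, ?_⟩
        simp only [hρ, MonoidHom.comp_apply, MulEquiv.coe_toMonoidHom, hg,
          MulEquiv.apply_symm_apply, Subgroup.coe_subtype]
    have hab' : ∀ x ∈ ρ.ker, ∀ y ∈ ρ.ker, x * y = y * x := by rw [hker]; exact hab
    have hsemi' : ∀ x ∈ ρ.ker, x ≠ 1 → ∀ ω : Ω, x • ω ≠ ω := by rw [hker]; exact hsemi
    have hn2' : 2 ≤ Nat.card ρ.ker := by rw [hker]; exact hn2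
    have hΩ' : Nat.card Ω = 6 * Nat.card ρ.ker := by rw [hker]; exact hΩcard
    have hZ' : (∀ x ∈ ρ.ker, x * x = 1) ∨ (∀ x ∈ ρ.ker, x * x = 1 → x = 1) := by
      rw [hker]; exact hZ
    exact core_A4 htrans hfix2 ρ hab' hsemi' hn2' hΩ' hZ' hrange
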